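/- Each frame element commutes with the coordinates: x^i·θ^a = θ^a·x^i for all i, a ∈ {−,0,+}, where θ⁻ := α⁻¹·Λ'vξ⁻, θ⁰ := α⁻¹·Λ'ρ'(s(q+1)·vx⁺ξ⁻ + ξ⁰), θ⁺ := α⁻¹·Λ'ρ'²(−sq(q+1)·v(x⁺)²ξ⁻ − (q+1)·x⁺ξ⁰ + x⁰ξ⁺). Thus the θ^a constitute a frame (Stehbein) for the differential calculus on the extended quantum Euclidean space. -/

import Mathlib

set_option maxHeartbeats 2000000


theorem stmt9 {K A : Type*} [Field K] [CharZero K] [Ring A] [Algebra K A]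
    (q s : K) (hq : q ≠ 0) (hs : s ≠ 0) (hsq : s ^ 2 = q)
    (xm x0 xp : A)
    (hx1 : xm * x0 = q • (x0 * xm))
    (hx2 : xp * x0 = q⁻¹ • (x0 * xp))
    (hx3 : xp * xm - xm * xp = (s - s⁻¹) • (x0 * x0))
    (hh : s - s⁻¹ ≠ 0)
    (α : K) (hα : α ≠ 0)
    (ξm ξ0 ξp : A)
    (hc1 : xm * ξm = (q ^ 2) • (ξm * xm))
    (hc2 : x0 * ξm = q • (ξm * x0))
    (hc3 : xp * ξm = ξm * xp)
    (hc4 : xm * ξ0 = q • (ξ0 * xm) + (q ^ 2 - 1) • (ξm * x0))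
    (hc5 : x0 * ξ0 = q • (ξ0 * x0) - ((s - s⁻¹) * (q + 1)) • (ξm * xp))
    (hc6 : xp * ξ0 = q • (ξ0 * xp))
    (hc7 : xm * ξp = ξp * xm - ((s - s⁻¹) * (q + 1)) • (ξ0 * x0) + ((s - s⁻¹) ^ 2 * (q + 1)) • (ξm * xp))
    (hc8 : x0 * ξp = q • (ξp * x0) + (q ^ 2 - 1) • (ξ0 * xp))
    (hc9 : xp * ξp = (q ^ 2) • (ξp * xp))
    (v ρ ρ' Λ Λ' : A)
    (hv1 : x0 * v = 1) (hv2 : v * x0 = 1)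
    (hρ2 : ρ * ρ = s⁻¹ • (xm * xp) + x0 * x0 + s • (xp * xm))
    (hρxm : ρ * xm = xm * ρ) (hρx0 : ρ * x0 = x0 * ρ) (hρxp : ρ * xp = xp * ρ)
    (hρi1 : ρ * ρ' = 1) (hρi2 : ρ' * ρ = 1)
    (hΛi1 : Λ * Λ' = 1) (hΛi2 : Λ' * Λ = 1)
    (hΛxm : xm * Λ = q • (Λ * xm)) (hΛx0 : x0 * Λ = q • (Λ * x0)) (hΛxp : xp * Λ = q • (Λ * xp))
    (hρΛ : ρ * Λ = q • (Λ * ρ))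
    (hξΛm : ξm * Λ = q • (Λ * ξm)) (hξΛ0 : ξ0 * Λ = q • (Λ * ξ0)) (hξΛp : ξp * Λ = q • (Λ * ξp))
    (hρξm : ρ * ξm = q • (ξm * ρ)) (hρξ0 : ρ * ξ0 = q • (ξ0 * ρ)) (hρξp : ρ * ξp = q • (ξp * ρ))
    (θm θ0 θp : A)
    (hθm : θm = α⁻¹ • (Λ' * v * ξm))
    (hθ0 : θ0 = α⁻¹ • (Λ' * ρ' * ((s * (q + 1)) • (v * xp * ξm) + ξ0)))
    (hθp : θp = α⁻¹ • (Λ' * (ρ' * ρ') * ((-(s * q * (q + 1))) • (v * (xp * xp) * ξm) - (q + 1) • (xp * ξ0) + x0 * ξp))) :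
    ∀ x ∈ ({xm, x0, xp} : Set A), ∀ t ∈ ({θm, θ0, θp} : Set A), x * t = t * x := by
  subst hθm hθ0 hθp
  subst hsq
  -- cancellation lemmas
  have cΛ1 : ∀ z : A, Λ * (Λ' * z) = z := fun z => by rw [← mul_assoc, hΛi1, one_mul]
  have cΛ2 : ∀ z : A, Λ' * (Λ * z) = z := fun z => by rw [← mul_assoc, hΛi2, one_mul]
  have cρ1 : ∀ z : A, ρ * (ρ' * z) = z := fun z => by rw [← mul_assoc, hρi1, one_mul]
  have cρ2 : ∀ z : A, ρ' * (ρ * z) = z := fun z => by rw [← mul_assoc, hρi2, one_mul]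
  have cv1 : ∀ z : A, x0 * (v * z) = z := fun z => by rw [← mul_assoc, hv1, one_mul]
  have cv2 : ∀ z : A, v * (x0 * z) = z := fun z => by rw [← mul_assoc, hv2, one_mul]
  -- x passes Λ'
  have PLm : ∀ y : A, xm * (Λ' * y) = (s^2)⁻¹ • (Λ' * (xm * y)) := by
    intro y
    have h1 : Λ' * ((xm * Λ) * (Λ' * y)) = Λ' * ((s^2 • (Λ * xm)) * (Λ' * y)) := by rw [hΛxm]
    simp only [mul_assoc, smul_mul_assoc, mul_smul_comm, cΛ1, cΛ2] at h1
    rw [h1]; match_scalars <;> field_simp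
  have PL0 : ∀ y : A, x0 * (Λ' * y) = (s^2)⁻¹ • (Λ' * (x0 * y)) := by
    intro y
    have h1 : Λ' * ((x0 * Λ) * (Λ' * y)) = Λ' * ((s^2 • (Λ * x0)) * (Λ' * y)) := by rw [hΛx0]
    simp only [mul_assoc, smul_mul_assoc, mul_smul_comm, cΛ1, cΛ2] at h1
    rw [h1]; match_scalars <;> field_simp
  have PLp : ∀ y : A, xp * (Λ' * y) = (s^2)⁻¹ • (Λ' * (xp * y)) := by
    intro y
    have h1 : Λ' * ((xp * Λ) * (Λ' * y)) = Λ' * ((s^2 • (Λ * xp)) * (Λ' * y)) := by rw [hΛxp]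
    simp only [mul_assoc, smul_mul_assoc, mul_smul_comm, cΛ1, cΛ2] at h1
    rw [h1]; match_scalars <;> field_simp
  -- x passes ρ'
  have PRm : ∀ y : A, xm * (ρ' * y) = ρ' * (xm * y) := by
    intro y
    have h1 : ρ' * ((ρ * xm) * (ρ' * y)) = ρ' * ((xm * ρ) * (ρ' * y)) := by rw [hρxm]
    simp only [mul_assoc, cρ1, cρ2] at h1
    rw [← h1]
  have PR0 : ∀ y : A, x0 * (ρ' * y) = ρ' * (x0 * y) := by
    intro y
    have h1 : ρ' * ((ρ * x0) * (ρ' * y)) = ρ' * ((x0 * ρ) * (ρ' * y)) := by rw [hρx0]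
    simp only [mul_assoc, cρ1, cρ2] at h1
    rw [← h1]
  have PRp : ∀ y : A, xp * (ρ' * y) = ρ' * (xp * y) := by
    intro y
    have h1 : ρ' * ((ρ * xp) * (ρ' * y)) = ρ' * ((xp * ρ) * (ρ' * y)) := by rw [hρxp]
    simp only [mul_assoc, cρ1, cρ2] at h1
    rw [← h1]
  -- x passes v
  have Pvm : ∀ y : A, xm * (v * y) = (s^2)⁻¹ • (v * (xm * y)) := by
    intro y
    have h1 : v * ((xm * x0) * (v * y)) = v * ((s^2 • (x0 * xm)) * (v * y)) := by rw [hx1]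
    simp only [mul_assoc, smul_mul_assoc, mul_smul_comm, cv1, cv2] at h1
    rw [h1]; match_scalars <;> field_simp
  have Pvp : ∀ y : A, xp * (v * y) = (s^2) • (v * (xp * y)) := by
    intro y
    have h1 : v * ((xp * x0) * (v * y)) = v * (((s^2)⁻¹ • (x0 * xp)) * (v * y)) := by rw [hx2]
    simp only [mul_assoc, smul_mul_assoc, mul_smul_comm, cv1, cv2] at h1
    rw [h1, smul_smul, mul_inv_cancel₀ (pow_ne_zero 2 hs), one_smul]
  -- x sorting
  have hx3' : xp * xm = xm * xp + (s - s⁻¹) • (x0 * x0) := by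
    rw [← hx3]; abel
  have Sm0 : ∀ y : A, xm * (x0 * y) = (s^2) • (x0 * (xm * y)) := by
    intro y; rw [← mul_assoc, hx1, smul_mul_assoc, mul_assoc]
  have Sp0 : ∀ y : A, xp * (x0 * y) = (s^2)⁻¹ • (x0 * (xp * y)) := by
    intro y; rw [← mul_assoc, hx2, smul_mul_assoc, mul_assoc]
  have Spm : ∀ y : A, xp * (xm * y) = xm * (xp * y) + (s - s⁻¹) • (x0 * (x0 * y)) := by
    intro y; rw [← mul_assoc, hx3', add_mul, smul_mul_assoc, mul_assoc, mul_assoc]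
  -- ξ passes x (tail forms)
  have Qmm : ξm * xm = ((s^2) ^ 2)⁻¹ • (xm * ξm) := by
    rw [hc1, smul_smul, inv_mul_cancel₀ (pow_ne_zero 2 hq), one_smul]
  have Qm0 : ξm * x0 = (s^2)⁻¹ • (x0 * ξm) := by
    rw [hc2, smul_smul, inv_mul_cancel₀ hq, one_smul]
  have Qmp : ξm * xp = xp * ξm := hc3.symm
  have Q0m : ξ0 * xm = (s^2)⁻¹ • (xm * ξ0) - ((s^2)⁻¹ * ((s^2) ^ 2 - 1)) • (ξm * x0) := by
    rw [hc4]; match_scalars <;> field_simp <;> ring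
  have Q00 : ξ0 * x0 = (s^2)⁻¹ • (x0 * ξ0) + ((s^2)⁻¹ * ((s - s⁻¹) * (s^2 + 1))) • (ξm * xp) := by
    rw [hc5]; match_scalars <;> field_simp <;> ring
  have Q0p : ξ0 * xp = (s^2)⁻¹ • (xp * ξ0) := by
    rw [hc6, smul_smul, inv_mul_cancel₀ hq, one_smul]
  have Qpm : ξp * xm = xm * ξp + ((s - s⁻¹) * (s^2 + 1)) • (ξ0 * x0)
      - ((s - s⁻¹) ^ 2 * (s^2 + 1)) • (ξm * xp) := by
    rw [hc7]; match_scalars <;> field_simp <;> ring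
  have Qp0 : ξp * x0 = (s^2)⁻¹ • (x0 * ξp) - ((s^2)⁻¹ * ((s^2) ^ 2 - 1)) • (ξ0 * xp) := by
    rw [hc8]; match_scalars <;> field_simp <;> ring
  have Qpp : ξp * xp = ((s^2) ^ 2)⁻¹ • (xp * ξp) := by
    rw [hc9, smul_smul, inv_mul_cancel₀ (pow_ne_zero 2 hq), one_smul]
  intro x hx t ht
  simp only [Set.mem_insert_iff, Set.mem_singleton_iff] at hx ht
  rcases hx with rfl | rfl | rfl <;> rcases ht with rfl | rfl | rfl <;>
  · simp only [mul_add, add_mul, mul_sub, sub_mul, smul_add, smul_sub, mul_smul_comm,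
      smul_mul_assoc, smul_smul, neg_smul, smul_neg, mul_neg, neg_mul, mul_one, one_mul,
      mul_assoc, cv1, cv2, PLm, PL0, PLp, PRm, PR0, PRp, Pvm, Pvp, Sm0, Sp0, Spm,
      Qmm, Qm0, Qmp, Q0m, Q00, Q0p, Qpm, Qp0, Qpp]
    all_goals match_scalars
    all_goals rw [← sub_eq_zero]
    all_goals field_simp
    all_goals try field_simp
    all_goals try ring_nf
    all_goals try field_simp
    all_goals try ring_nf
    all_goals try field_simp
    all_goals try ring_nf
    all_goals try field_simp
    all_goals first | ring1 | tauto
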